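/- Every finite DAG D without v-structures admits a CBSP ordering: a topological ordering σ that satisfies the clique block property (each block between consecutive sink vertices induces a clique in the skeleton) and the shared-parents property (whenever a and b are consecutive in σ and lie in the same clique block, every parent of a in D is also a parent of b in D). -/

import Mathlib

/-- A directed graph (given by its adjacency relation) is a DAG if it has no directed cycles. -/
def IsDAG {V : Type*} (adj : V → V → Prop) : Prop := ∀ v : V, ¬ Relation.TransGen adj v v

/-- Skeleton adjacency: forget edge directions. -/
def Skel {V : Type*} (adj : V → V → Prop) (u v : V) : Prop := adj u v ∨ adj v u

/-- A clique in the skeleton: pairwise adjacent set of vertices. -/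
def IsClique {V : Type*} (adj : V → V → Prop) (C : Set V) : Prop :=
  ∀ ⦃u⦄, u ∈ C → ∀ ⦃v⦄, v ∈ C → u ≠ v → Skel adj u v

/-- A maximal clique of the skeleton. -/
def IsMaxClique {V : Type*} (adj : V → V → Prop) (C : Set V) : Prop :=
  IsClique adj C ∧ ∀ C' : Set V, IsClique adj C' → C ⊆ C' → C = C'

/-- No v-structures: any two distinct parents of a common vertex are adjacent in the skeleton. -/
def NoVStruct {V : Type*} (adj : V → V → Prop) : Prop :=
  ∀ a b c : V, adj b a → adj c a → b ≠ c → Skel adj b c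

/-- A sink vertex of the DAG: {s} ∪ parents(s) is a maximal clique of the skeleton. -/
def IsSink {V : Type*} (adj : V → V → Prop) (s : V) : Prop :=
  IsMaxClique adj (insert s {u | adj u s})

/-- The clique block of the sink vertex s with respect to the ordering σ: vertices at
or before s, and strictly after every sink vertex preceding s. -/
def Block {V : Type*} [Fintype V] (adj : V → V → Prop)
    (σ : V ≃ Fin (Fintype.card V)) (s : V) : Set V :=
  {u | σ u ≤ σ s ∧ ∀ t : V, IsSink adj t → σ t < σ s → σ t < σ u}

section Aux

open Relation

variable {V : Type*} [Fintype V] (adj : V → V → Prop)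

/-- The set of parents of a vertex. -/
def Pa (v : V) : Set V := {p | adj p v}

/-- Invariant for the (reversed) placement list: head = most recently placed vertex. -/
def PlaceInv (M : List V) : Prop :=
  M.Nodup ∧
  M.Pairwise (fun x y => ¬ adj x y) ∧
  (∀ v ∈ M, ∀ p, adj p v → p ∈ M) ∧
  M.Chain' (fun b a => ¬ IsSink adj a → adj a b ∧ ∀ p, adj p a → adj p b) ∧
  (∀ a T, M = a :: T → ∀ v, v ∉ T → (∀ p, adj p v → p ∈ T) →
      (Pa adj v).ncard ≤ (Pa adj a).ncard)

variable {adj}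

lemma wfTG (hdag : IsDAG adj) : WellFounded (Relation.TransGen adj) := by
  have : IsIrrefl V (Relation.TransGen adj) := ⟨hdag⟩
  exact Finite.wellFounded_of_trans_of_irrefl _

omit [Fintype V] in
lemma isSink_of_noChild (hnv : NoVStruct adj) (s : V) (h : ∀ x, ¬ adj s x) :
    IsSink adj s := by
  constructor
  · intro u hu v hv huv
    rcases Set.mem_insert_iff.mp hu with rfl | hu
    · rcases Set.mem_insert_iff.mp hv with rfl | hv
      · exact absurd rfl huv
      · exact Or.inr hv
    · rcases Set.mem_insert_iff.mp hv with rfl | hv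
      · exact Or.inl hu
      · exact hnv s u v hu hv huv
  · intro C' hC' hsub
    refine Set.Subset.antisymm hsub ?_
    intro v hv
    by_cases hvs : v = s
    · exact hvs ▸ Set.mem_insert _ _
    · rcases hC' hv (hsub (Set.mem_insert _ _)) hvs with h' | h'
      · exact Set.mem_insert_iff.mpr (Or.inr h')
      · exact absurd h' (h v)

lemma keyStep (hdag : IsDAG adj) (hnv : NoVStruct adj) (a : V) (T : List V)
    (hInv : PlaceInv adj (a :: T)) (b : V) (hbM : b ∉ a :: T)
    (hbav : ∀ p, adj p b → p ∈ a :: T)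
    (hmax : ∀ v, v ∉ (a :: T) → (∀ p, adj p v → p ∈ (a :: T)) →
      (Pa adj v).ncard ≤ (Pa adj b).ncard)
    (hns : ¬ IsSink adj a) :
    adj a b ∧ ∀ p, adj p a → adj p b := by
  classical
  obtain ⟨hnd, hpw, hcl, hch, hmaxhead⟩ := hInv
  have hirr : ∀ v : V, ¬ adj v v := fun v h => hdag v (TransGen.single h)
  have hpwa : ∀ y ∈ T, ¬ adj a y := fun y hy => (List.pairwise_cons.mp hpw).1 y hy
  set C : Set V := insert a (Pa adj a) with hC
  have hCM : ∀ u ∈ C, u ∈ (a :: T) := by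
    intro u hu
    rcases Set.mem_insert_iff.mp hu with rfl | hu
    · exact List.mem_cons_self
    · exact hcl a (List.mem_cons_self) u hu
  have hCclique : IsClique adj C := by
    intro u hu v hv huv
    rcases Set.mem_insert_iff.mp hu with rfl | hu
    · rcases Set.mem_insert_iff.mp hv with rfl | hv
      · exact absurd rfl huv
      · exact Or.inr hv
    · rcases Set.mem_insert_iff.mp hv with rfl | hv
      · exact Or.inl hu
      · exact hnv a u v hu hv huv
  -- since a is not a sink, there is t outside C adjacent to all of C
  have hnotmax : ¬ (∀ C' : Set V, IsClique adj C' → C ⊆ C' → C = C') := by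
    intro h; exact hns ⟨hCclique, h⟩
  push_neg at hnotmax
  obtain ⟨C', hC'clique, hCC', hne⟩ := hnotmax
  obtain ⟨t, htC', htC⟩ : ∃ t, t ∈ C' ∧ t ∉ C := by
    by_contra h
    push_neg at h
    exact hne (Set.Subset.antisymm hCC' h)
  have htM : t ∉ (a :: T) := by
    intro htM
    have hta : t ≠ a := fun h => htC (h ▸ Set.mem_insert _ _)
    rcases hC'clique (hCC' (Set.mem_insert _ _)) htC' hta.symm with h | h
    · have htT : t ∈ T := by
        rcases List.mem_cons.mp htM with h' | h'
        · exact absurd h' hta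
        · exact h'
      exact hpwa t htT h
    · exact htC (Set.mem_insert_iff.mpr (Or.inr h))
  have hCt : ∀ u ∈ C, adj u t := by
    intro u hu
    have hut : u ≠ t := fun h => htC (h ▸ hu)
    rcases hC'clique (hCC' hu) htC' hut with h | h
    · exact h
    · exact absurd (hcl u (hCM u hu) t h) htM
  -- pick a minimal such vertex x; it is available
  obtain ⟨x, hxS, hxmin⟩ := (wfTG hdag).has_min
    {y | y ∉ (a :: T) ∧ ∀ u ∈ C, adj u y} ⟨t, htM, hCt⟩
  obtain ⟨hxM, hCx⟩ := hxS
  have hxav : ∀ p, adj p x → p ∈ (a :: T) := by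
    intro p hp
    by_contra hpM
    have hpS : p ∈ {y | y ∉ (a :: T) ∧ ∀ u ∈ C, adj u y} := by
      refine ⟨hpM, fun u hu => ?_⟩
      have hup : u ≠ p := fun h => hpM (h ▸ hCM u hu)
      rcases hnv x u p (hCx u hu) hp hup with h | h
      · exact h
      · exact absurd (hcl u (hCM u hu) p h) hpM
    exact hxmin p hpS (TransGen.single hp)
  have hCpx : C ⊆ Pa adj x := fun u hu => hCx u hu
  have hcard1 : (Pa adj a).ncard + 1 ≤ (Pa adj x).ncard := by
    have h0 : a ∉ Pa adj a := hirr a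
    have h1 : C.ncard = (Pa adj a).ncard + 1 := Set.ncard_insert_of_notMem h0
    have h2 : C.ncard ≤ (Pa adj x).ncard := Set.ncard_le_ncard hCpx
    omega
  have hxb : (Pa adj x).ncard ≤ (Pa adj b).ncard := hmax x hxM hxav
  have hab : adj a b := by
    by_contra hab
    have hpbT : ∀ p, adj p b → p ∈ T := by
      intro p hp
      rcases List.mem_cons.mp (hbav p hp) with rfl | h'
      · exact absurd hp hab
      · exact h'
    have hbT : b ∉ T := fun h => hbM (List.mem_cons_of_mem _ h)
    have := hmaxhead a T rfl b hbT hpbT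
    omega
  have hsub : Pa adj b \ {a} ⊆ Pa adj a := by
    rintro w ⟨hwb, hwa⟩
    have hwa' : w ≠ a := hwa
    rcases hnv b w a hwb hab hwa' with h | h
    · exact h
    · exfalso
      have hwM := hbav w hwb
      have hwT : w ∈ T := by
        rcases List.mem_cons.mp hwM with h' | h'
        · exact absurd h' hwa'
        · exact h'
      exact hpwa w hwT h
  have hcard2 : (Pa adj a).ncard ≤ (Pa adj b \ {a}).ncard := by
    have h3 : (Pa adj b \ {a}).ncard = (Pa adj b).ncard - 1 :=
      Set.ncard_diff_singleton_of_mem hab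
    omega
  have heq : Pa adj b \ {a} = Pa adj a := Set.eq_of_subset_of_ncard_le hsub hcard2
  refine ⟨hab, fun p hp => ?_⟩
  have hp' : p ∈ Pa adj a := hp
  rw [← heq] at hp'
  exact hp'.1

lemma build (hdag : IsDAG adj) (hnv : NoVStruct adj) :
    ∀ (k : ℕ) (M : List V), PlaceInv adj M → M.length + k = Fintype.card V →
      ∃ M', PlaceInv adj M' ∧ M'.length = Fintype.card V := by
  intro k
  induction k with
  | zero => exact fun M hM hlen => ⟨M, hM, by omega⟩
  | succ k ih =>
    intro M hM hlen
    classical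
    have hex : ∃ v, v ∉ M := by
      by_contra h
      push_neg at h
      have h1 : (Finset.univ : Finset V) ⊆ M.toFinset := fun v _ =>
        List.mem_toFinset.mpr (h v)
      have h2 : Fintype.card V ≤ M.toFinset.card := by
        simpa using Finset.card_le_card h1
      have h3 : M.toFinset.card ≤ M.length := M.toFinset_card_le
      omega
    obtain ⟨v0, hv0⟩ := hex
    obtain ⟨x, hxM, hxmin⟩ := (wfTG hdag).has_min {v | v ∉ M} ⟨v0, hv0⟩
    have hxav : ∀ p, adj p x → p ∈ M := by
      intro p hp
      by_contra hpM
      exact hxmin p hpM (Relation.TransGen.single hp)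
    set A : Finset V := Finset.univ.filter (fun v => v ∉ M ∧ ∀ p, adj p v → p ∈ M)
      with hA
    have hAne : A.Nonempty := by
      refine ⟨x, ?_⟩
      rw [hA, Finset.mem_filter]
      exact ⟨Finset.mem_univ _, hxM, hxav⟩
    obtain ⟨b, hbA, hbmax⟩ := A.exists_max_image (fun v => (Pa adj v).ncard) hAne
    rw [hA, Finset.mem_filter] at hbA
    obtain ⟨-, hbM, hbav⟩ := hbA
    have hmax' : ∀ v, v ∉ M → (∀ p, adj p v → p ∈ M) →
        (Pa adj v).ncard ≤ (Pa adj b).ncard := by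
      intro v h1 h2
      exact hbmax v (by rw [hA, Finset.mem_filter]; exact ⟨Finset.mem_univ _, h1, h2⟩)
    obtain ⟨hnd, hpw, hcl, hch, hmh⟩ := hM
    have hnadjb : ∀ y ∈ M, ¬ adj b y := fun y hy h => hbM (hcl y hy b h)
    refine ih (b :: M) ⟨?_, ?_, ?_, ?_, ?_⟩ (by simp; omega)
    · exact List.nodup_cons.mpr ⟨hbM, hnd⟩
    · exact List.pairwise_cons.mpr ⟨hnadjb, hpw⟩
    · intro v hv p hp
      rcases List.mem_cons.mp hv with rfl | hv
      · exact List.mem_cons_of_mem _ (hbav p hp)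
      · exact List.mem_cons_of_mem _ (hcl v hv p hp)
    · cases M with
      | nil => exact List.isChain_singleton _
      | cons a T =>
        refine List.isChain_cons_cons.mpr ⟨?_, hch⟩
        intro hns
        exact keyStep hdag hnv a T ⟨hnd, hpw, hcl, hch, hmh⟩ b hbM hbav hmax' hns
    · intro a' T' hMeq v hv hpav
      have ha' : a' = b := by injection hMeq with h1 h2; exact h1.symm
      have hT' : T' = M := by injection hMeq with h1 h2; exact h2.symm
      subst ha' hT'
      exact hmax' v hv hpav

end Aux

/-- Every finite DAG without v-structures admits a CBSP ordering: a topological ordering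
with the clique block property and the shared-parents property (consecutive vertices in
a common clique block have nested parent sets). -/
theorem stmt11 {V : Type*} [Fintype V] (adj : V → V → Prop)
    (hdag : IsDAG adj) (hnv : NoVStruct adj) :
    ∃ σ : V ≃ Fin (Fintype.card V),
      (∀ a b : V, adj a b → σ a < σ b) ∧
      (∀ s : V, IsSink adj s → IsClique adj (Block adj σ s)) ∧
      (∀ u : V, ∃ s : V, IsSink adj s ∧ u ∈ Block adj σ s) ∧
      (∀ a b : V, (σ b : ℕ) = (σ a : ℕ) + 1 →
        (∃ s : V, IsSink adj s ∧ a ∈ Block adj σ s ∧ b ∈ Block adj σ s) →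
        ∀ p : V, adj p a → adj p b) := by
  classical
  obtain ⟨M, hInv, hlen⟩ := build hdag hnv (Fintype.card V) []
    ⟨List.nodup_nil, List.Pairwise.nil, by simp, List.isChain_nil,
      by intro a T h; simp at h⟩ (by simp)
  obtain ⟨hnd, hpw, hcl, hch, -⟩ := hInv
  have hmem : ∀ v : V, v ∈ M := by
    intro v
    have h1 : M.toFinset.card = Fintype.card V := by
      rw [List.toFinset_card_of_nodup hnd, hlen]
    have h2 : M.toFinset = Finset.univ := Finset.eq_univ_of_card _ h1
    rw [← List.mem_toFinset, h2]
    exact Finset.mem_univ v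
  set L := M.reverse with hL
  have hndL : L.Nodup := List.nodup_reverse.mpr hnd
  have hmemL : ∀ v : V, v ∈ L := fun v => List.mem_reverse.mpr (hmem v)
  have hlenL : L.length = Fintype.card V := by rw [hL, List.length_reverse, hlen]
  let e : Fin L.length ≃ V := List.Nodup.getEquivOfForallMemList L hndL hmemL
  set σ : V ≃ Fin (Fintype.card V) := e.symm.trans (finCongr hlenL) with hσ
  have hsymm : ∀ j : Fin (Fintype.card V),
      σ.symm j = L.get ⟨(j : ℕ), by rw [hlenL]; exact j.isLt⟩ := fun j => rfl
  have hget : ∀ (i : ℕ) (h : i < Fintype.card V),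
      σ (L.get ⟨i, by rw [hlenL]; exact h⟩) = ⟨i, h⟩ := by
    intro i h
    have := hsymm ⟨i, h⟩
    rw [← this, Equiv.apply_symm_apply]
  -- topological order
  have hFa : ∀ a b : V, adj a b → σ a < σ b := by
    have hpwL : L.Pairwise (fun x y => ¬ adj y x) := List.pairwise_reverse.mpr hpw
    have hpwg := List.pairwise_iff_get.mp hpwL
    intro a b hab
    have hne : a ≠ b := by rintro rfl; exact hdag a (Relation.TransGen.single hab)
    have hne' : σ a ≠ σ b := fun h => hne (σ.injective h)
    rcases lt_or_gt_of_ne hne' with h | h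
    · exact h
    · exfalso
      have h1 : (σ b : ℕ) < (σ a : ℕ) := h
      have hia : L.get ⟨(σ a : ℕ), by rw [hlenL]; exact (σ a).isLt⟩ = a := by
        rw [← hsymm (σ a), Equiv.symm_apply_apply]
      have hib : L.get ⟨(σ b : ℕ), by rw [hlenL]; exact (σ b).isLt⟩ = b := by
        rw [← hsymm (σ b), Equiv.symm_apply_apply]
      have := hpwg ⟨(σ b : ℕ), by rw [hlenL]; exact (σ b).isLt⟩
        ⟨(σ a : ℕ), by rw [hlenL]; exact (σ a).isLt⟩ h1
      rw [hia, hib] at this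
      exact this hab
  -- consecutive pair property
  have hFc : ∀ a b : V, (σ b : ℕ) = (σ a : ℕ) + 1 → ¬ IsSink adj a →
      adj a b ∧ ∀ p, adj p a → adj p b := by
    have hchL : L.Chain' (fun a b => ¬ IsSink adj a → adj a b ∧ ∀ p, adj p a → adj p b) := by
      rw [hL]
      exact List.isChain_reverse.mpr hch
    have hchg := List.isChain_iff_getElem.mp hchL
    intro a b hab hns
    have h1 : (σ a : ℕ) < L.length - 1 := by
      have := (σ b).isLt
      rw [hlenL]
      omega
    have := hchg (σ a : ℕ) (by omega)
    have hia : L.get ⟨(σ a : ℕ), by omega⟩ = a := by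
      rw [← hsymm (σ a), Equiv.symm_apply_apply]
    have hib : L.get ⟨(σ a : ℕ) + 1, by omega⟩ = b := by
      have h2 : σ.symm (σ b) = b := Equiv.symm_apply_apply _ _
      rw [hsymm (σ b)] at h2
      have h3 : (⟨(σ a : ℕ) + 1, by omega⟩ : Fin L.length) =
          ⟨(σ b : ℕ), by rw [hlenL]; exact (σ b).isLt⟩ := Fin.ext hab.symm
      rw [h3]
      exact h2
    simp only [List.get_eq_getElem] at hia hib
    rw [hia, hib] at this
    exact this hns
  -- chain within a sink-free stretch
  have chainUp : ∀ (k : ℕ) (u v : V), (σ v : ℕ) = (σ u : ℕ) + (k + 1) →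
      (∀ w, (σ u : ℕ) ≤ (σ w : ℕ) → (σ w : ℕ) < (σ v : ℕ) → ¬ IsSink adj w) →
      adj u v ∧ ∀ p, adj p u → adj p v := by
    intro k
    induction k with
    | zero =>
      intro u v h hni
      exact hFc u v h (hni u le_rfl (by omega))
    | succ k ih =>
      intro u v h hni
      have hlt : (σ u : ℕ) + (k + 1) < Fintype.card V := by
        have := (σ v).isLt
        omega
      set v' := σ.symm ⟨(σ u : ℕ) + (k + 1), hlt⟩ with hv'
      have hσv' : (σ v' : ℕ) = (σ u : ℕ) + (k + 1) := by
        rw [hv', Equiv.apply_symm_apply]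
      have IH := ih u v' hσv' (fun w h1 h2 => hni w h1 (by omega))
      have step := hFc v' v (by omega) (hni v' (by omega) (by omega))
      exact ⟨step.2 u IH.1, fun p hp => step.2 p (IH.2 p hp)⟩
  refine ⟨σ, hFa, ?_, ?_, ?_⟩
  · -- clique blocks
    intro s hs u hu v hv huv
    have key : ∀ u' v' : V, u' ∈ Block adj σ s → v' ∈ Block adj σ s →
        (σ u' : ℕ) < (σ v' : ℕ) → adj u' v' := by
      intro u' v' hu' hv' hlt
      obtain ⟨k, hk⟩ : ∃ k, (σ v' : ℕ) = (σ u' : ℕ) + (k + 1) :=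
        ⟨(σ v' : ℕ) - (σ u' : ℕ) - 1, by omega⟩
      refine (chainUp k u' v' hk ?_).1
      intro w h1 h2 hw
      have h3 : σ w < σ s := by
        have hv's : σ v' ≤ σ s := hv'.1
        rw [Fin.le_def] at hv's
        rw [Fin.lt_def]
        omega
      have := hu'.2 w hw h3
      rw [Fin.lt_def] at this
      omega
    have hne' : σ u ≠ σ v := fun h => huv (σ.injective h)
    rcases lt_or_gt_of_ne hne' with h | h
    · exact Or.inl (key u v hu hv h)
    · exact Or.inr (key v u hv hu h)
  · -- coverage
    intro u
    have hn0 : 0 < Fintype.card V := lt_of_le_of_lt (Nat.zero_le _) (σ u).isLt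
    set slast := σ.symm ⟨Fintype.card V - 1, by omega⟩ with hsl
    have hslast : (σ slast : ℕ) = Fintype.card V - 1 := by
      rw [hsl, Equiv.apply_symm_apply]
    have hsink : IsSink adj slast := by
      apply isSink_of_noChild hnv
      intro x hx
      have h1 := hFa slast x hx
      rw [Fin.lt_def] at h1
      have := (σ x).isLt
      omega
    set T : Finset V := Finset.univ.filter
      (fun t => IsSink adj t ∧ (σ u : ℕ) ≤ (σ t : ℕ)) with hT
    have hTne : T.Nonempty := by
      refine ⟨slast, ?_⟩
      rw [hT, Finset.mem_filter]
      refine ⟨Finset.mem_univ _, hsink, ?_⟩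
      have := (σ u).isLt
      omega
    obtain ⟨s, hsT, hsmin⟩ := T.exists_min_image (fun t => (σ t : ℕ)) hTne
    rw [hT, Finset.mem_filter] at hsT
    obtain ⟨-, hssink, hus⟩ := hsT
    refine ⟨s, hssink, ?_, ?_⟩
    · rw [Fin.le_def]; exact hus
    · intro t ht hts
      rw [Fin.lt_def] at hts ⊢
      by_contra hcontra
      push_neg at hcontra
      have htT : t ∈ T := by
        rw [hT, Finset.mem_filter]
        exact ⟨Finset.mem_univ _, ht, hcontra⟩
      have := hsmin t htT
      omega
  · -- shared parents
    intro a b hab hblk p hp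
    obtain ⟨s, hs, ha, hb⟩ := hblk
    have hna : ¬ IsSink adj a := by
      intro hsink
      have h1 : σ a < σ s := by
        have := hb.1
        rw [Fin.le_def] at this
        rw [Fin.lt_def]
        omega
      have := ha.2 a hsink h1
      exact lt_irrefl _ this
    exact (hFc a b hab hna).2 p hp
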